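/- In the polynomial ring F₂[u₁,…,u_k], the product of all nonzero F₂-linear combinations α₁u₁ + ⋯ + α_k u_k over α ∈ (F₂)^k \ {0} equals the sum over all permutations π of {1,…,k} of the monomials u_{π(1)}^{2^{k−1}} u_{π(2)}^{2^{k−2}} ⋯ u_{π(k)}^{2^0}. -/

import Mathlib

open MvPolynomial


lemma zmod2_cases : ∀ a : ZMod 2, a = 0 ∨ a = 1 := by decide

lemma zmod2_pow_pow (a : ZMod 2) (m : ℕ) : a ^ 2 ^ m = a := by
  rcases zmod2_cases a with h | h <;> subst h
  · exact zero_pow (Nat.pos_of_ne_zero (by positivity)).ne'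
  · exact one_pow _

lemma mv_unit_eq_one : ∀ (k : ℕ) (p : MvPolynomial (Fin k) (ZMod 2)), IsUnit p → p = 1 := by
  intro k
  induction k with
  | zero =>
    intro p hp
    have e := MvPolynomial.isEmptyAlgEquiv (ZMod 2) (Fin 0)
    have h1 : e p = 1 := by
      have h2 : IsUnit (e p) := hp.map e
      rcases zmod2_cases (e p) with h | h
      · exact absurd (h ▸ h2) (by simp)
      · exact h
    have := congrArg e.symm h1
    simpa using this
  | succ m ih =>
    intro p hp
    have e := MvPolynomial.finSuccEquiv (ZMod 2) m
    have h1 : IsUnit (e p) := hp.map e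
    rw [Polynomial.isUnit_iff] at h1
    obtain ⟨r, hr, hrp⟩ := h1
    have hr1 : r = 1 := ih r hr
    have : e p = 1 := by rw [← hrp, hr1, map_one]
    have := congrArg e.symm this
    simpa using this

instance mvZMod2_units_subsingleton (k : ℕ) :
    Subsingleton (MvPolynomial (Fin k) (ZMod 2))ˣ := by
  constructor
  intro u v
  ext
  rw [mv_unit_eq_one k u.val u.isUnit, mv_unit_eq_one k v.val v.isUnit]


lemma sub_dvd_sub_aeval {k : ℕ} (i0 : Fin k) (q : MvPolynomial (Fin k) (ZMod 2))
    (p : MvPolynomial (Fin k) (ZMod 2)) :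
    (X i0 - q) ∣ (p - aeval (Function.update X i0 q) p) := by
  induction p using MvPolynomial.induction_on with
  | C a => simp [aeval_C, algebraMap_eq]
  | add p r hp hr =>
    have : p + r - aeval (Function.update X i0 q) (p + r)
        = (p - aeval (Function.update X i0 q) p) + (r - aeval (Function.update X i0 q) r) := by
      rw [map_add]; ring
    rw [this]; exact dvd_add hp hr
  | mul_X p j hp =>
    have : p * X j - aeval (Function.update X i0 q) (p * X j)
        = (p - aeval (Function.update X i0 q) p) * X j
          + aeval (Function.update X i0 q) p * (X j - Function.update X i0 q j) := by
      rw [map_mul, aeval_X]; ring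
    rw [this]
    refine dvd_add (Dvd.dvd.mul_right hp _) (Dvd.dvd.mul_left ?_ _)
    by_cases h : j = i0
    · subst h; rw [Function.update_self]
    · rw [Function.update_of_ne h]; simp

lemma permSum_eq_det {k : ℕ} (g : Fin k → MvPolynomial (Fin k) (ZMod 2)) :
    ∑ π : Equiv.Perm (Fin k), ∏ i : Fin k, (g (π i)) ^ 2 ^ (k - 1 - i.val)
      = (Matrix.of fun j i : Fin k => (g j) ^ 2 ^ (k - 1 - i.val)).det := by
  rw [Matrix.det_apply]
  refine Finset.sum_congr rfl fun σ _ => ?_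
  have hsign : (Equiv.Perm.sign σ) • (∏ i : Fin k, (g (σ i)) ^ 2 ^ (k - 1 - i.val))
      = ∏ i : Fin k, (g (σ i)) ^ 2 ^ (k - 1 - i.val) := by
    rw [Units.smul_def]
    rcases Int.units_eq_one_or (Equiv.Perm.sign σ) with h | h <;> rw [h]
    · simp
    · push_cast
      rw [neg_smul, one_smul, CharTwo.neg_eq]
  exact hsign.symm


lemma prime_X_mv {k : ℕ} (i0 : Fin k) : Prime (X i0 : MvPolynomial (Fin k) (ZMod 2)) := by
  cases k with
  | zero => exact i0.elim0
  | succ m =>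
    have h0 : Prime (X (0 : Fin (m + 1)) : MvPolynomial (Fin (m + 1)) (ZMod 2)) := by
      rw [← MulEquiv.prime_iff (MvPolynomial.finSuccEquiv (ZMod 2) m).toMulEquiv]
      simpa [MvPolynomial.finSuccEquiv_X_zero] using Polynomial.prime_X
    have := (MulEquiv.prime_iff (MvPolynomial.renameEquiv (ZMod 2) (Equiv.swap (0 : Fin (m+1)) i0)).toMulEquiv).mpr h0
    simpa [MvPolynomial.renameEquiv_apply, MvPolynomial.rename_X, Equiv.swap_apply_left] using this

lemma prime_linear {k : ℕ} (α : Fin k → ZMod 2) (i0 : Fin k) (h : α i0 = 1) :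
    Prime (∑ i : Fin k, (C (α i) * X i : MvPolynomial (Fin k) (ZMod 2))) := by
  set L : MvPolynomial (Fin k) (ZMod 2) := ∑ i : Fin k, C (α i) * X i with hL
  set f : Fin k → MvPolynomial (Fin k) (ZMod 2) := Function.update X i0 L with hf
  set s : MvPolynomial (Fin k) (ZMod 2) := ∑ i ∈ Finset.univ.erase i0, C (α i) * X i with hs
  have hLs : L = X i0 + s := by
    rw [hL, ← Finset.add_sum_erase _ _ (Finset.mem_univ i0), h, map_one, one_mul, hs]
  have key : ∀ p, aeval f (aeval f p) = p := by
    have hcomp : (aeval f).comp (aeval f) = AlgHom.id (ZMod 2) (MvPolynomial (Fin k) (ZMod 2)) := by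
      apply MvPolynomial.algHom_ext
      intro j
      by_cases hj : j = i0
      · rw [hj]
        simp only [AlgHom.comp_apply, aeval_X, AlgHom.id_apply]
        rw [hf, Function.update_self, hL, map_sum]
        have : ∀ i : Fin k, aeval (Function.update X i0 L) (C (α i) * X i)
            = C (α i) * Function.update X i0 L i := by
          intro i; rw [map_mul, aeval_X, aeval_C, algebraMap_eq]
        rw [Finset.sum_congr rfl fun i _ => this i]
        rw [← Finset.add_sum_erase _ _ (Finset.mem_univ i0), Function.update_self, h, map_one,
          one_mul]
        have herase : ∑ i ∈ Finset.univ.erase i0, C (α i) * Function.update X i0 L i = s := by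
          rw [hs]
          refine Finset.sum_congr rfl fun i hi => ?_
          rw [Function.update_of_ne (Finset.ne_of_mem_erase hi)]
        rw [herase, hLs, add_assoc, CharTwo.add_self_eq_zero, add_zero]
      · simp only [AlgHom.comp_apply, aeval_X, AlgHom.id_apply, hf,
          Function.update_of_ne hj, aeval_X, Function.update_of_ne hj]
    intro p
    have := congrArg (fun φ => φ p) hcomp
    simpa using this
  let E : MvPolynomial (Fin k) (ZMod 2) ≃ₐ[ZMod 2] MvPolynomial (Fin k) (ZMod 2) :=
    AlgEquiv.ofAlgHom (aeval f) (aeval f)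
      (by apply AlgHom.ext; intro p; simpa using key p)
      (by apply AlgHom.ext; intro p; simpa using key p)
  have hE : E (X i0) = L := by
    show aeval f (X i0) = L
    rw [aeval_X, hf, Function.update_self]
  have := (MulEquiv.prime_iff E.toMulEquiv).mpr (prime_X_mv i0)
  rwa [show E.toMulEquiv (X i0) = E (X i0) from rfl, hE] at this

lemma linear_dvd_D (α : Fin k → ZMod 2) (i0 : Fin k) (h : α i0 = 1) :
    (∑ i : Fin k, (C (α i) * X i : MvPolynomial (Fin k) (ZMod 2)))
      ∣ ∑ π : Equiv.Perm (Fin k),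
          ∏ i : Fin k, (X (π i) : MvPolynomial (Fin k) (ZMod 2)) ^ 2 ^ (k - 1 - i.val) := by
  classical
  set R := MvPolynomial (Fin k) (ZMod 2)
  set q : R := ∑ i ∈ Finset.univ.erase i0, C (α i) * X i with hq
  set g : Fin k → R := Function.update X i0 q with hg
  set D : R := ∑ π : Equiv.Perm (Fin k), ∏ i : Fin k, (X (π i) : R) ^ 2 ^ (k - 1 - i.val) with hD
  have hLq : (∑ i : Fin k, (C (α i) * X i : R)) = X i0 - q := by
    rw [CharTwo.sub_eq_add, ← Finset.add_sum_erase _ _ (Finset.mem_univ i0), h, map_one, one_mul,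
      hq]
  have haev : aeval g D = 0 := by
    have h1 : aeval g D = ∑ π : Equiv.Perm (Fin k),
        ∏ i : Fin k, (g (π i)) ^ 2 ^ (k - 1 - i.val) := by
      rw [hD, map_sum]
      refine Finset.sum_congr rfl fun π _ => ?_
      rw [map_prod]
      refine Finset.prod_congr rfl fun i _ => ?_
      rw [map_pow, aeval_X]
    rw [h1, permSum_eq_det g]
    set B : Matrix (Fin k) (Fin k) R :=
      Matrix.of fun j i : Fin k => (g j) ^ 2 ^ (k - 1 - i.val) with hB
    set c : Fin k → R := fun j => if j = i0 then 0 else C (α j) with hc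
    have hrow : B i0 = ∑ j : Fin k, c j • B j := by
      funext i
      have hBi0 : B i0 i = q ^ 2 ^ (k - 1 - i.val) := by
        rw [hB]; simp only [Matrix.of_apply]; rw [hg, Function.update_self]
      rw [hBi0, hq, sum_pow_char_pow]
      have hterm : ∀ j ∈ Finset.univ.erase i0,
          (C (α j) * X j : R) ^ 2 ^ (k - 1 - i.val) = c j • B j i := by
        intro j hj
        have hj' : j ≠ i0 := Finset.ne_of_mem_erase hj
        rw [mul_pow, ← map_pow, zmod2_pow_pow]
        simp only [hc, smul_eq_mul, hB, Matrix.of_apply, if_neg hj']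
        rw [hg, Function.update_of_ne hj']
      rw [Finset.sum_congr rfl hterm]
      rw [Fintype.sum_apply]
      -- goal : ∑ j ∈ erase, c j • B j i = ∑ j, (c j • B j) i
      rw [← Finset.add_sum_erase _ (fun j => (c j • B j) i) (Finset.mem_univ i0)]
      have hci0 : c i0 = 0 := by simp [hc]
      rw [Pi.smul_apply, hci0, zero_smul, zero_add]
      simp only [Pi.smul_apply, smul_eq_mul]
    calc B.det = (B.updateRow i0 (∑ j : Fin k, c j • B j)).det := by
          rw [← hrow, Matrix.updateRow_eq_self]
      _ = c i0 • B.det := Matrix.det_updateRow_sum B i0 c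
      _ = 0 := by rw [hc]; simp
  have hdvd := sub_dvd_sub_aeval i0 q D
  rw [haev, sub_zero] at hdvd
  rw [hLq]
  exact hdvd


lemma exp_inj {k : ℕ} : Function.Injective (fun i : Fin k => 2 ^ (k - 1 - i.val)) := by
  intro a b hab
  simp only at hab
  have h := Nat.pow_right_injective (le_refl 2) hab
  have ha := a.isLt
  have hb := b.isLt
  exact Fin.ext (by omega)

lemma coeff_D {k : ℕ} :
    coeff (Finsupp.equivFunOnFinite.symm fun i : Fin k => 2 ^ (k - 1 - i.val))
      (∑ π : Equiv.Perm (Fin k),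
        ∏ i : Fin k, (X (π i) : MvPolynomial (Fin k) (ZMod 2)) ^ 2 ^ (k - 1 - i.val)) = 1 := by
  classical
  set m0 : Fin k →₀ ℕ := Finsupp.equivFunOnFinite.symm fun i : Fin k => 2 ^ (k - 1 - i.val)
    with hm0
  rw [MvPolynomial.coeff_sum]
  have hterm : ∀ π : Equiv.Perm (Fin k),
      coeff m0 (∏ i : Fin k, (X (π i) : MvPolynomial (Fin k) (ZMod 2)) ^ 2 ^ (k - 1 - i.val))
        = if π = 1 then 1 else 0 := by
    intro π
    set m' : Fin k →₀ ℕ :=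
      Finsupp.equivFunOnFinite.symm (fun j : Fin k => 2 ^ (k - 1 - (π.symm j).val)) with hm'
    have hm'app : ∀ j, m' j = 2 ^ (k - 1 - (π.symm j).val) := fun j => rfl
    have hprod : (∏ i : Fin k, (X (π i) : MvPolynomial (Fin k) (ZMod 2)) ^ 2 ^ (k - 1 - i.val))
        = monomial m' 1 := by
      have h1 : (∏ i : Fin k, (X (π i) : MvPolynomial (Fin k) (ZMod 2)) ^ 2 ^ (k - 1 - i.val))
          = ∏ j : Fin k, (X j : MvPolynomial (Fin k) (ZMod 2)) ^ m' j := by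
        refine Fintype.prod_equiv π _ _ fun i => ?_
        rw [hm'app, Equiv.symm_apply_apply]
      have hsupp : m'.support = Finset.univ :=
        Finset.eq_univ_of_forall fun j => Finsupp.mem_support_iff.mpr (by
          rw [hm'app]; positivity)
      rw [h1, ← MvPolynomial.prod_X_pow_eq_monomial, hsupp]
    rw [hprod, MvPolynomial.coeff_monomial]
    by_cases hπ : π = 1
    · subst hπ
      rw [if_pos, if_pos rfl]
      rw [hm0, hm']
      congr 1
    · rw [if_neg hπ, if_neg]
      intro hcon
      apply hπ
      have : ∀ j, m' j = m0 j := fun j => by rw [hcon]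
      have h2 : ∀ j : Fin k, π.symm j = j := by
        intro j
        have := this j
        rw [hm'app] at this
        have h0 : m0 j = 2 ^ (k - 1 - j.val) := rfl
        rw [h0] at this
        exact exp_inj this
      ext j
      have := h2 (π j)
      rw [Equiv.symm_apply_apply] at this
      have h4 : π j = j := by simpa using this.symm
      simp [h4]
  rw [Finset.sum_congr rfl fun π _ => hterm π]
  simp


lemma sum_two_pow (n : ℕ) : ∑ i ∈ Finset.range n, 2 ^ i = 2 ^ n - 1 := by
  induction n with
  | zero => simp
  | succ m ih =>
    rw [Finset.sum_range_succ, ih]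
    have : 1 ≤ 2 ^ m := Nat.one_le_two_pow
    have h2 : (2:ℕ) ^ (m+1) = 2 ^ m + 2 ^ m := by ring
    omega

lemma sum_exp_eq {k : ℕ} : ∑ i : Fin k, 2 ^ (k - 1 - i.val) = 2 ^ k - 1 := by
  rw [Fin.sum_univ_eq_sum_range (fun j => 2 ^ (k - 1 - j)) k]
  have := Finset.sum_range_reflect (fun j => 2 ^ j) k
  have h2 : ∀ j ∈ Finset.range k, 2 ^ (k - 1 - j) = (fun j => 2 ^ j) (k - 1 - j) := by
    intro j _; rfl
  rw [Finset.sum_congr rfl h2, this, sum_two_pow]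

lemma scaling_const {k : ℕ} (c : MvPolynomial (Fin k) (ZMod 2))
    (hc : aeval (fun i : Fin k => (X none * X (some i) : MvPolynomial (Option (Fin k)) (ZMod 2))) c
        = rename some c) :
    c = C (constantCoeff c) := by
  classical
  set ev : MvPolynomial (Option (Fin k)) (ZMod 2) →ₐ[ZMod 2] MvPolynomial (Fin k) (ZMod 2) :=
    aeval (fun o : Option (Fin k) => o.elim 0 X) with hev
  have h1 : ev (aeval (fun i : Fin k =>
      (X none * X (some i) : MvPolynomial (Option (Fin k)) (ZMod 2))) c)
      = aeval (fun _ : Fin k => (0 : MvPolynomial (Fin k) (ZMod 2))) c := by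
    have hcomp : ev.comp (aeval (fun i : Fin k =>
        (X none * X (some i) : MvPolynomial (Option (Fin k)) (ZMod 2))))
        = aeval (fun _ : Fin k => (0 : MvPolynomial (Fin k) (ZMod 2))) := by
      apply MvPolynomial.algHom_ext
      intro i
      simp [hev]
    exact congrArg (fun φ => φ c) hcomp
  have h2 : ev (rename some c) = c := by
    have hcomp : ev.comp (rename (R := ZMod 2) (some : Fin k → Option (Fin k)))
        = AlgHom.id (ZMod 2) (MvPolynomial (Fin k) (ZMod 2)) := by
      apply MvPolynomial.algHom_ext
      intro i
      simp [hev]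
    exact congrArg (fun φ => φ c) hcomp
  have := congrArg ev hc
  rw [h1, h2] at this
  calc c = (aeval fun _ : Fin k => (0 : MvPolynomial (Fin k) (ZMod 2))) c := this.symm
    _ = C (constantCoeff c) := by rw [aeval_zero', algebraMap_eq]

/-- The top Dickson polynomial: in `F₂[u₁,…,u_k]`, the product of all nonzero linear forms
`α₁u₁ + ⋯ + α_k u_k` over `α ∈ (F₂)^k \ {0}` equals the sum over all permutations `π` of
`{1,…,k}` of the monomials `u_{π(1)}^{2^(k-1)} u_{π(2)}^{2^(k-2)} ⋯ u_{π(k)}^{2^0}`. -/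
theorem dickson_product_eq_perm_sum (k : ℕ) (hk : 1 ≤ k) :
    (∏ α ∈ Finset.univ.filter (fun α : Fin k → ZMod 2 => α ≠ 0),
        (∑ i : Fin k, (C (α i) * X i : MvPolynomial (Fin k) (ZMod 2))))
      = ∑ π : Equiv.Perm (Fin k), ∏ i : Fin k, (X (π i) : MvPolynomial (Fin k) (ZMod 2)) ^ 2 ^ (k - 1 - i.val) := by
  classical
  set F : Finset (Fin k → ZMod 2) := Finset.univ.filter (fun α : Fin k → ZMod 2 => α ≠ 0)
    with hF
  set L : (Fin k → ZMod 2) → MvPolynomial (Fin k) (ZMod 2) :=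
    fun α => ∑ i : Fin k, C (α i) * X i with hLdef
  set D : MvPolynomial (Fin k) (ZMod 2) :=
    ∑ π : Equiv.Perm (Fin k), ∏ i : Fin k,
      (X (π i) : MvPolynomial (Fin k) (ZMod 2)) ^ 2 ^ (k - 1 - i.val) with hDdef
  set P : MvPolynomial (Fin k) (ZMod 2) := ∏ α ∈ F, L α with hPdef
  show P = D
  have hone : ∀ α ∈ F, ∃ i0 : Fin k, α i0 = 1 := by
    intro α hα
    have hα0 : α ≠ 0 := (Finset.mem_filter.mp hα).2
    obtain ⟨i0, hi0⟩ := Function.ne_iff.mp hα0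
    rcases zmod2_cases (α i0) with h | h
    · exact absurd h hi0
    · exact ⟨i0, h⟩
  have hprime : ∀ α ∈ F, Prime (L α) := by
    intro α hα
    obtain ⟨i0, hi0⟩ := hone α hα
    exact prime_linear α i0 hi0
  have hdvd : ∀ α ∈ F, L α ∣ D := by
    intro α hα
    obtain ⟨i0, hi0⟩ := hone α hα
    exact linear_dvd_D α i0 hi0
  have hLinj : Function.Injective L := by
    intro a b hab
    funext i
    have := congrArg (eval (Pi.single i (1 : ZMod 2))) hab
    simp only [hLdef, map_sum, eval_mul, eval_C, eval_X] at this
    rwa [Finset.sum_eq_single i (fun j _ hj => by rw [Pi.single_eq_of_ne hj, mul_zero])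
        (fun h => absurd (Finset.mem_univ i) h),
      Finset.sum_eq_single i (fun j _ hj => by rw [Pi.single_eq_of_ne hj, mul_zero])
        (fun h => absurd (Finset.mem_univ i) h), Pi.single_eq_same, mul_one, mul_one] at this
  have hPdvdD : P ∣ D := by
    rw [hPdef, ← Finset.prod_image (g := L) (f := fun p => p) (fun a _ b _ hab => hLinj hab)]
    refine Finset.prod_primes_dvd D ?_ ?_
    · intro p hp
      obtain ⟨α, hα, rfl⟩ := Finset.mem_image.mp hp
      exact hprime α hα
    · intro p hp
      obtain ⟨α, hα, rfl⟩ := Finset.mem_image.mp hp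
      exact hdvd α hα
  obtain ⟨c, hc⟩ := hPdvdD
  have hP0 : P ≠ 0 := by
    rw [hPdef, Finset.prod_ne_zero_iff]
    exact fun α hα => (hprime α hα).ne_zero
  have hD1 : coeff (Finsupp.equivFunOnFinite.symm fun i : Fin k => 2 ^ (k - 1 - i.val)) D = 1 :=
    coeff_D
  have hD0 : D ≠ 0 := by
    intro h
    rw [h, coeff_zero] at hD1
    exact one_ne_zero hD1.symm
  have hcard : F.card = 2 ^ k - 1 := by
    rw [hF, Finset.filter_ne', Finset.card_erase_of_mem (Finset.mem_univ 0), Finset.card_univ]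
    congr 1
    rw [Fintype.card_fun]
    simp
  -- scaling argument
  set ψ : MvPolynomial (Fin k) (ZMod 2) →ₐ[ZMod 2] MvPolynomial (Option (Fin k)) (ZMod 2) :=
    aeval (fun i : Fin k => (X none * X (some i) : MvPolynomial (Option (Fin k)) (ZMod 2)))
    with hψ
  set ι : MvPolynomial (Fin k) (ZMod 2) →ₐ[ZMod 2] MvPolynomial (Option (Fin k)) (ZMod 2) :=
    rename some with hι
  have hψL : ∀ α : Fin k → ZMod 2, ψ (L α) = X none * ι (L α) := by
    intro α
    rw [hLdef]
    simp only [map_sum, map_mul, hψ, hι, aeval_X, aeval_C, rename_X, rename_C, algebraMap_eq]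
    rw [Finset.mul_sum]
    refine Finset.sum_congr rfl fun i _ => ?_
    ring
  have hψP : ψ P = X none ^ (2 ^ k - 1) * ι P := by
    rw [hPdef, map_prod, map_prod]
    rw [Finset.prod_congr rfl fun α _ => hψL α, Finset.prod_mul_distrib, Finset.prod_const,
      hcard]
  have hψD : ψ D = X none ^ (2 ^ k - 1) * ι D := by
    rw [hDdef, map_sum, map_sum, Finset.mul_sum]
    refine Finset.sum_congr rfl fun π _ => ?_
    rw [map_prod, map_prod]
    have hterm : ∀ i : Fin k,
        ψ ((X (π i) : MvPolynomial (Fin k) (ZMod 2)) ^ 2 ^ (k - 1 - i.val))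
          = X none ^ 2 ^ (k - 1 - i.val)
            * ι ((X (π i) : MvPolynomial (Fin k) (ZMod 2)) ^ 2 ^ (k - 1 - i.val)) := by
      intro i
      rw [map_pow, map_pow, hψ, hι, aeval_X, rename_X, mul_pow]
    rw [Finset.prod_congr rfl fun i _ => hterm i, Finset.prod_mul_distrib,
      Finset.prod_pow_eq_pow_sum, sum_exp_eq]
  have hι_inj : Function.Injective ι := by
    rw [hι]
    exact MvPolynomial.rename_injective some (Option.some_injective _)
  have hcancel : ψ c = ι c := by
    have h1 : ψ D = ψ P * ψ c := by rw [hc, map_mul]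
    have h2 : ι D = ι P * ι c := by rw [hc, map_mul]
    rw [hψD, hψP, h2] at h1
    have hne : (X none ^ (2 ^ k - 1) * ι P : MvPolynomial (Option (Fin k)) (ZMod 2)) ≠ 0 := by
      apply mul_ne_zero
      · exact pow_ne_zero _ (MvPolynomial.X_ne_zero none)
      · intro h
        exact hP0 (hι_inj (by rw [h, map_zero]))
    rw [← mul_assoc] at h1
    exact (mul_left_cancel₀ hne h1).symm
  have hcC : c = C (constantCoeff c) := scaling_const c hcancel
  have hc0 : c ≠ 0 := by
    intro h
    rw [h, mul_zero] at hc
    exact hD0 hc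
  have hcc0 : constantCoeff c ≠ 0 := by
    intro h
    rw [h, map_zero] at hcC
    exact hc0 hcC
  have hc1 : c = 1 := by
    rcases zmod2_cases (constantCoeff c) with h | h
    · exact absurd h hcc0
    · rw [hcC, h, map_one]
  rw [hc, hc1, mul_one]
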